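/- Let X be a topological space, Z ⊆ X a closed subset, Y a metric space, and f : X → Y length-connected. A continuous map g : X → Y satisfies f ⊵ g (rel Z) — meaning g coincides with f on Z and ℓ_Y(g∘γ) ≤ ℓ_Y(f∘γ) for every curve γ in X — if and only if g is length-connected, coincides with f on Z, and ⟨x₁−x₂⟩_f ≥ ⟨x₁−x₂⟩_g for all x₁, x₂ ∈ X. -/

import Mathlib

open Set Metric ENNReal unitInterval

noncomputable section

/-- The length of a curve parametrized by the unit interval, as total variation. -/
def curveELength {Y : Type*} [PseudoEMetricSpace Y] (c : unitInterval → Y) : ℝ≥0∞ :=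
  eVariationOn c Set.univ

/-- The length pseudodistance induced by a map `f : X → Y`: the infimum of the lengths of
`f ∘ γ` over all curves `γ` joining the two points (`⊤` if there is no such curve). -/
def lengthPd {X Y : Type*} [TopologicalSpace X] [PseudoEMetricSpace Y]
    (f : X → Y) (x z : X) : ℝ≥0∞ :=
  ⨅ γ : Path x z, curveELength (fun t => f (γ t))

/-- `f` is length-connected: the induced length pseudodistance is everywhere finite. -/
def LengthConnected {X Y : Type*} [TopologicalSpace X] [PseudoEMetricSpace Y]
    (f : X → Y) : Prop :=
  ∀ x z : X, lengthPd f x z ≠ ⊤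

/-- The connecting pseudodistance induced by `f`: infimum of `diam (f '' C)` over connected
sets `C` containing both points. -/
def connPd {X Y : Type*} [TopologicalSpace X] [PseudoEMetricSpace Y]
    (f : X → Y) (x z : X) : ℝ≥0∞ :=
  ⨅ C : {C : Set X // IsConnected C ∧ x ∈ C ∧ z ∈ C}, EMetric.diam (f '' (C : Set X))

/-- `g` does not increase the length of any curve, compared with `f`. -/
def IsShorter {X Y : Type*} [TopologicalSpace X] [PseudoEMetricSpace Y]
    (f g : X → Y) : Prop :=
  ∀ c : C(unitInterval, X), curveELength (fun t => g (c t)) ≤ curveELength (fun t => f (c t))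

/-- `f` is length-minimizing relative to `Z`: any continuous competitor agreeing with `f`
on `Z` and not increasing the length of any curve in fact preserves all curve lengths. -/
def LengthMinimizing {X Y : Type*} [TopologicalSpace X] [PseudoEMetricSpace Y]
    (f : X → Y) (Z : Set X) : Prop :=
  Continuous f ∧ ∀ g : X → Y, Continuous g → Set.EqOn f g Z → IsShorter f g →
    ∀ c : C(unitInterval, X), curveELength (fun t => g (c t)) = curveELength (fun t => f (c t))

/-- `γ : ℝ → Y` is a unit-speed geodesic from `x` to `y` (on `[0, dist x y]`). -/
def IsGeodesicParam {Y : Type*} [MetricSpace Y] (γ : ℝ → Y) (x y : Y) : Prop :=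
  γ 0 = x ∧ γ (dist x y) = y ∧
    ∀ s ∈ Set.Icc (0:ℝ) (dist x y), ∀ t ∈ Set.Icc (0:ℝ) (dist x y),
      dist (γ s) (γ t) = |s - t|

/-- A geodesic metric space: any two points are joined by a geodesic. -/
def IsGeodesicSpace (Y : Type*) [MetricSpace Y] : Prop :=
  ∀ x y : Y, ∃ γ : ℝ → Y, IsGeodesicParam γ x y

/-- The diameter `R_κ` of the model surface `M_κ`: `π/√κ` for `κ > 0`, `∞` otherwise. -/
def modelDiam (κ : ℝ) : ℝ≥0∞ :=
  if κ ≤ 0 then ⊤ else ENNReal.ofReal (Real.pi / Real.sqrt κ)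

/-- Cosine of the angle opposite the side of length `c` in a triangle of side lengths
`a`, `b`, `c` in the model plane of curvature `κ` (law of cosines). -/
def modelCosAngle (κ a b c : ℝ) : ℝ :=
  if κ = 0 then (a ^ 2 + b ^ 2 - c ^ 2) / (2 * a * b)
  else if 0 < κ then
    (Real.cos (Real.sqrt κ * c) - Real.cos (Real.sqrt κ * a) * Real.cos (Real.sqrt κ * b)) /
      (Real.sin (Real.sqrt κ * a) * Real.sin (Real.sqrt κ * b))
  else
    (Real.cosh (Real.sqrt (-κ) * a) * Real.cosh (Real.sqrt (-κ) * b) -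
        Real.cosh (Real.sqrt (-κ) * c)) /
      (Real.sinh (Real.sqrt (-κ) * a) * Real.sinh (Real.sqrt (-κ) * b))

/-- Distance in the model plane of curvature `κ` between the endpoints of two segments of
lengths `a` and `b` emanating from a common vertex at an angle with cosine `cosθ`. -/
def modelSideLength (κ a b cosθ : ℝ) : ℝ :=
  if κ = 0 then Real.sqrt (a ^ 2 + b ^ 2 - 2 * a * b * cosθ)
  else if 0 < κ then
    Real.arccos (Real.cos (Real.sqrt κ * a) * Real.cos (Real.sqrt κ * b) +
      Real.sin (Real.sqrt κ * a) * Real.sin (Real.sqrt κ * b) * cosθ) / Real.sqrt κ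
  else
    -- `Real.log (x + √(x² - 1))` is the inverse hyperbolic cosine `arcosh x`
    Real.log ((Real.cosh (Real.sqrt (-κ) * a) * Real.cosh (Real.sqrt (-κ) * b) -
        Real.sinh (Real.sqrt (-κ) * a) * Real.sinh (Real.sqrt (-κ) * b) * cosθ) +
      Real.sqrt ((Real.cosh (Real.sqrt (-κ) * a) * Real.cosh (Real.sqrt (-κ) * b) -
        Real.sinh (Real.sqrt (-κ) * a) * Real.sinh (Real.sqrt (-κ) * b) * cosθ) ^ 2 - 1)) /
      Real.sqrt (-κ)

/-- `Y` is a CAT(κ) space: complete, geodesic, and every geodesic triangle of perimeter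
`< 2 R_κ` satisfies the point-side comparison with its model triangle in `M_κ`. -/
def IsCATSpace (κ : ℝ) (Y : Type*) [MetricSpace Y] : Prop :=
  CompleteSpace Y ∧ IsGeodesicSpace Y ∧
    ∀ p q r : Y, ∀ γ : ℝ → Y, IsGeodesicParam γ p q →
      ENNReal.ofReal (dist p q + dist q r + dist r p) < 2 * modelDiam κ →
      ∀ s ∈ Set.Icc (0:ℝ) (dist p q),
        dist (γ s) r ≤
          modelSideLength κ s (dist p r) (modelCosAngle κ (dist p q) (dist p r) (dist q r))

/-- A set is geodesically convex if every geodesic between its points stays inside it. -/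
def IsGeodesicallyConvex {Y : Type*} [MetricSpace Y] (K : Set Y) : Prop :=
  ∀ x ∈ K, ∀ y ∈ K, ∀ γ : ℝ → Y, IsGeodesicParam γ x y →
    ∀ t ∈ Set.Icc (0:ℝ) (dist x y), γ t ∈ K

/-- A finite graph (connected finite one-dimensional CW complex) structure on a
topological space `Γ`: finitely many edges, injective away from endpoints, with
endpoints in a finite vertex set, covering `Γ`. -/
structure FiniteGraphStruct (Γ : Type*) [TopologicalSpace Γ] where
  n : ℕ
  edge : Fin n → C(unitInterval, Γ)
  vertices : Set Γ
  vertices_finite : vertices.Finite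
  endpoints_mem : ∀ i, edge i 0 ∈ vertices ∧ edge i 1 ∈ vertices
  inj_on : ∀ i, Set.InjOn (edge i) {t : unitInterval | t ≠ 0 ∧ t ≠ 1}
  cover : ∀ x : Γ, x ∈ vertices ∨ ∃ i t, edge i t = x

end

section Aux

variable {X Y : Type*} [TopologicalSpace X] [PseudoEMetricSpace Y]

/-- The distance between the images of two points under `g` is at most the length
pseudodistance. -/
lemma edist_le_lengthPd (g : X → Y) (x z : X) : edist (g x) (g z) ≤ lengthPd g x z := by
  refine le_iInf fun γ => ?_
  have h := eVariationOn.edist_le (fun t => g (γ t)) (Set.mem_univ (0 : unitInterval))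
    (Set.mem_univ (1 : unitInterval))
  simpa [curveELength, γ.source, γ.target] using h

/-- The length pseudodistance between two points of a curve is at most the variation of the
composite on the corresponding subinterval. -/
lemma lengthPd_le_eVariationOn (f : X → Y) (c : C(unitInterval, X)) {a b : unitInterval}
    (hab : a ≤ b) :
    lengthPd f (c a) (c b) ≤ eVariationOn (fun t => f (c t)) (Set.Icc a b) := by
  have hba : (0:ℝ) ≤ (b:ℝ) - a := by simpa using (Subtype.coe_le_coe.2 hab)
  set φ : unitInterval → unitInterval := fun t =>
    ⟨(a:ℝ) + t * ((b:ℝ) - a), by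
      constructor
      · have := mul_nonneg t.2.1 hba
        have := a.2.1
        linarith
      · have ht : (t:ℝ) * ((b:ℝ) - a) ≤ 1 * ((b:ℝ) - a) :=
          mul_le_mul_of_nonneg_right t.2.2 hba
        have : (a:ℝ) + t * ((b:ℝ) - a) ≤ (b:ℝ) := by linarith
        exact this.trans b.2.2⟩ with hφ
  have hφ0 : φ 0 = a := by simp [hφ, Subtype.ext_iff]
  have hφ1 : φ 1 = b := by simp [hφ, Subtype.ext_iff]
  have hmono : Monotone φ := by
    intro s t hst
    simp only [hφ, Subtype.mk_le_mk]
    have := mul_le_mul_of_nonneg_right (Subtype.coe_le_coe.2 hst) hba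
    exact (show (a:ℝ) + s * ((b:ℝ) - a) ≤ (a:ℝ) + t * ((b:ℝ) - a) by linarith)
  have hcont : Continuous φ := by
    apply Continuous.subtype_mk
    exact continuous_const.add (continuous_subtype_val.mul continuous_const)
  have hmem : ∀ t, φ t ∈ Set.Icc a b := by
    intro t
    constructor
    · show (a:ℝ) ≤ (a:ℝ) + t * ((b:ℝ) - a)
      have : (0:ℝ) ≤ (t:ℝ) * ((b:ℝ) - a) := mul_nonneg t.2.1 hba
      linarith
    · show (a:ℝ) + t * ((b:ℝ) - a) ≤ (b:ℝ)
      have := mul_le_mul_of_nonneg_right t.2.2 hba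
      linarith
  let γ : Path (c a) (c b) :=
    ⟨⟨fun t => c (φ t), c.continuous.comp hcont⟩, by simp [hφ0], by simp [hφ1]⟩
  have h1 : lengthPd f (c a) (c b) ≤ curveELength (fun t => f (γ t)) := iInf_le _ γ
  refine h1.trans ?_
  have h2 : curveELength (fun t => f (γ t)) =
      eVariationOn (fun t => f (c t)) (φ '' Set.univ) := by
    have := eVariationOn.comp_eq_of_monotoneOn (fun t => f (c t)) (t := Set.univ) φ (hmono.monotoneOn _)
    exact this
  rw [h2]
  exact eVariationOn.mono _ (by rintro x ⟨t, -, rfl⟩; exact hmem t)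

lemma sum_eVariationOn_Icc_le {α : Type*} [LinearOrder α] (f : α → Y) {u : ℕ → α}
    (hu : Monotone u) (n : ℕ) :
    ∑ i ∈ Finset.range n, eVariationOn f (Set.Icc (u i) (u (i + 1))) ≤
      eVariationOn f (Set.Icc (u 0) (u n)) := by
  induction n with
  | zero => simp
  | succ n ih =>
    rw [Finset.sum_range_succ]
    have h := eVariationOn.Icc_add_Icc f (s := Set.univ) (hu (Nat.zero_le n))
      (hu n.le_succ) (Set.mem_univ _)
    simp only [Set.univ_inter] at h
    calc ∑ i ∈ Finset.range n, eVariationOn f (Set.Icc (u i) (u (i + 1))) +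
          eVariationOn f (Set.Icc (u n) (u (n + 1)))
        ≤ eVariationOn f (Set.Icc (u 0) (u n)) +
          eVariationOn f (Set.Icc (u n) (u (n + 1))) := add_le_add_left ih _
      _ = eVariationOn f (Set.Icc (u 0) (u (n + 1))) := h

end Aux

/-- characterization of the relation `f ⊵ g (rel Z)` for a
length-connected map `f`. -/
theorem dominates_iff {X Y : Type*} [TopologicalSpace X] [MetricSpace Y]
    (Z : Set X) (hZ : IsClosed Z) (f g : X → Y) (hf : Continuous f)
    (hg : Continuous g) (hlc : LengthConnected f) :
    (Set.EqOn f g Z ∧ IsShorter f g) ↔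
      (LengthConnected g ∧ Set.EqOn f g Z ∧
        ∀ x₁ x₂ : X, lengthPd g x₁ x₂ ≤ lengthPd f x₁ x₂) := by
  constructor
  · rintro ⟨heq, hsh⟩
    have hle : ∀ x₁ x₂ : X, lengthPd g x₁ x₂ ≤ lengthPd f x₁ x₂ := fun x₁ x₂ =>
      iInf_mono fun γ => hsh γ.toContinuousMap
    refine ⟨fun x z => ?_, heq, hle⟩
    exact ((hle x z).trans_lt (lt_top_iff_ne_top.2 (hlc x z))).ne
  · rintro ⟨-, heq, hle⟩
    refine ⟨heq, fun c => ?_⟩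
    show eVariationOn (fun t => g (c t)) Set.univ ≤ eVariationOn (fun t => f (c t)) Set.univ
    refine iSup_le ?_
    rintro ⟨n, u, hu, -⟩
    calc ∑ i ∈ Finset.range n, edist (g (c (u (i + 1)))) (g (c (u i)))
        ≤ ∑ i ∈ Finset.range n,
            eVariationOn (fun t => f (c t)) (Set.Icc (u i) (u (i + 1))) := by
          refine Finset.sum_le_sum fun i _ => ?_
          rw [edist_comm]
          exact (edist_le_lengthPd g _ _).trans ((hle _ _).trans
            (lengthPd_le_eVariationOn f c (hu i.le_succ)))
      _ ≤ eVariationOn (fun t => f (c t)) (Set.Icc (u 0) (u n)) :=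
          sum_eVariationOn_Icc_le _ hu n
      _ ≤ eVariationOn (fun t => f (c t)) Set.univ :=
          eVariationOn.mono _ (Set.subset_univ _)
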